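/- arXiv:2311.15910 — 4 statements merged into one kernel-verified Lean document; each statement's English description precedes it below -/
import Mathlib

section
/- Let K be a field, E a graph, v, w ∈ E^0, and e_1, …, e_n distinct edges with s(e_i) = v, r(e_i) = w. For P, Q ∈ GL_n(wL_K(E)w), the endomorphisms satisfy φ_P = φ_Q if and only if P = Q. Consequently, φ_P = id_{L_K(E)} if and only if P is the identity matrix w·I_n of M_n(wL_K(E)w). -/
/-- A directed graph `E = (E⁰, E¹, s, r)`. -/
structure DirGraph : Type 1 where
  V : Type
  E : Type
  s : E → V
  r : E → V

/-- Generators of the Leavitt path algebra: vertices, edges and ghost edges. -/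
inductive LGen (G : DirGraph) : Type
  | vertex : G.V → LGen G
  | edge : G.E → LGen G
  | ghost : G.E → LGen G

/-- The defining relations of the Leavitt path algebra. -/
inductive LRel (K : Type) [Field K] (G : DirGraph) :
    FreeAlgebra K (LGen G) → FreeAlgebra K (LGen G) → Prop
  | vertexIdem (u : G.V) :
      LRel K G (FreeAlgebra.ι K (LGen.vertex u) * FreeAlgebra.ι K (LGen.vertex u))
        (FreeAlgebra.ι K (LGen.vertex u))
  | vertexOrth (u u' : G.V) (h : u ≠ u') :
      LRel K G (FreeAlgebra.ι K (LGen.vertex u) * FreeAlgebra.ι K (LGen.vertex u')) 0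
  | sourceEdge (e : G.E) :
      LRel K G (FreeAlgebra.ι K (LGen.vertex (G.s e)) * FreeAlgebra.ι K (LGen.edge e))
        (FreeAlgebra.ι K (LGen.edge e))
  | edgeRange (e : G.E) :
      LRel K G (FreeAlgebra.ι K (LGen.edge e) * FreeAlgebra.ι K (LGen.vertex (G.r e)))
        (FreeAlgebra.ι K (LGen.edge e))
  | ghostSource (e : G.E) :
      LRel K G (FreeAlgebra.ι K (LGen.ghost e) * FreeAlgebra.ι K (LGen.vertex (G.s e)))
        (FreeAlgebra.ι K (LGen.ghost e))
  | rangeGhost (e : G.E) :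
      LRel K G (FreeAlgebra.ι K (LGen.vertex (G.r e)) * FreeAlgebra.ι K (LGen.ghost e))
        (FreeAlgebra.ι K (LGen.ghost e))
  | ghostEdgeSame (e : G.E) :
      LRel K G (FreeAlgebra.ι K (LGen.ghost e) * FreeAlgebra.ι K (LGen.edge e))
        (FreeAlgebra.ι K (LGen.vertex (G.r e)))
  | ghostEdgeNe (e f : G.E) (h : e ≠ f) :
      LRel K G (FreeAlgebra.ι K (LGen.ghost e) * FreeAlgebra.ι K (LGen.edge f)) 0
  | ck2 (u : G.V) (hfin : {e : G.E | G.s e = u}.Finite) (hne : {e : G.E | G.s e = u}.Nonempty) :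
      LRel K G (FreeAlgebra.ι K (LGen.vertex u))
        (hfin.toFinset.sum fun e =>
          FreeAlgebra.ι K (LGen.edge e) * FreeAlgebra.ι K (LGen.ghost e))

/-- The Leavitt path algebra `L_K(E)` of a graph. -/
abbrev LPA (K : Type) [Field K] (G : DirGraph) : Type := RingQuot (LRel K G)

noncomputable def vertexEl (K : Type) [Field K] (G : DirGraph) (u : G.V) : LPA K G :=
  RingQuot.mkAlgHom K (LRel K G) (FreeAlgebra.ι K (LGen.vertex u))

noncomputable def edgeEl (K : Type) [Field K] (G : DirGraph) (e : G.E) : LPA K G :=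
  RingQuot.mkAlgHom K (LRel K G) (FreeAlgebra.ι K (LGen.edge e))

noncomputable def ghostEl (K : Type) [Field K] (G : DirGraph) (e : G.E) : LPA K G :=
  RingQuot.mkAlgHom K (LRel K G) (FreeAlgebra.ι K (LGen.ghost e))

/-- A list of edges is a (finite) path when ranges and sources match up. -/
def IsPath (G : DirGraph) (l : List G.E) : Prop :=
  l.Chain' fun e f => G.r e = G.s f

noncomputable def edgeProd (K : Type) [Field K] (G : DirGraph) (l : List G.E) : LPA K G :=
  (l.map (edgeEl K G)).prod

/-- For a path `q`, the element `q* = e_k* ⋯ e_1*`. -/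
noncomputable def ghostProd (K : Type) [Field K] (G : DirGraph) (l : List G.E) : LPA K G :=
  (l.reverse.map (ghostEl K G)).prod

/-- The degree `d` component of the ℤ-grading of `L_K(E)`:
the `K`-span of the elements `p q*` with `r(p) = r(q)` and `|p| - |q| = d`. -/
noncomputable def lpaComponent (K : Type) [Field K] (G : DirGraph) (d : ℤ) :
    Submodule K (LPA K G) :=
  Submodule.span K {x : LPA K G | ∃ p q : List G.E, ∃ u : G.V,
    IsPath G p ∧ IsPath G q ∧ (p.length : ℤ) - (q.length : ℤ) = d ∧
    x = edgeProd K G p * vertexEl K G u * ghostProd K G q}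

/-- Membership in the corner `w L_K(E) w`. -/
def InCorner (K : Type) [Field K] (G : DirGraph) (w : G.V) (x : LPA K G) : Prop :=
  vertexEl K G w * x * vertexEl K G w = x

/-- `(P, P')` is a pair consisting of an element of `GL_n(w L_K(E) w)` and its inverse:
all entries lie in the corner `w L_K(E) w`, and `P P' = P' P = w·I_n`,
the identity matrix of `M_n(w L_K(E) w)`. -/
def IsCornerGLPair (K : Type) [Field K] (G : DirGraph) (w : G.V) {n : ℕ}
    (P P' : Matrix (Fin n) (Fin n) (LPA K G)) : Prop :=
  (∀ i j, InCorner K G w (P i j)) ∧ (∀ i j, InCorner K G w (P' i j)) ∧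
    P * P' = Matrix.diagonal (fun _ => vertexEl K G w) ∧
    P' * P = Matrix.diagonal (fun _ => vertexEl K G w)

/-- The defining property of the endomorphism `φ_P` of `L_K(E)` attached to a matrix
`P` (with inverse `P'`) over the corner `w L_K(E) w`:  it fixes all vertices, fixes all
edges and ghost edges other than `e_1, …, e_n`, and sends
`e_i ↦ Σ_k e_k p_{k i}` and `e_i* ↦ Σ_k p'_{i k} e_k*`. -/
def PhiProps (K : Type) [Field K] (G : DirGraph) {n : ℕ} (es : Fin n → G.E)
    (P P' : Matrix (Fin n) (Fin n) (LPA K G)) (φ : LPA K G →ₐ[K] LPA K G) : Prop :=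
  (∀ u : G.V, φ (vertexEl K G u) = vertexEl K G u) ∧
  (∀ e : G.E, e ∉ Set.range es → φ (edgeEl K G e) = edgeEl K G e) ∧
  (∀ e : G.E, e ∉ Set.range es → φ (ghostEl K G e) = ghostEl K G e) ∧
  (∀ i, φ (edgeEl K G (es i)) = ∑ k, edgeEl K G (es k) * P k i) ∧
  (∀ i, φ (ghostEl K G (es i)) = ∑ k, P' i k * ghostEl K G (es k))


section Aux

variable {K : Type} [Field K] {G : DirGraph}

lemma vertex_idem (u : G.V) :
    vertexEl K G u * vertexEl K G u = vertexEl K G u := by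
  simpa only [vertexEl, map_mul] using
    RingQuot.mkAlgHom_rel K (LRel.vertexIdem (K := K) (G := G) u)

lemma ghost_edge_same (e : G.E) :
    ghostEl K G e * edgeEl K G e = vertexEl K G (G.r e) := by
  simpa only [ghostEl, edgeEl, vertexEl, map_mul] using
    RingQuot.mkAlgHom_rel K (LRel.ghostEdgeSame (K := K) (G := G) e)

lemma ghost_edge_ne (e f : G.E) (h : e ≠ f) :
    ghostEl K G e * edgeEl K G f = 0 := by
  simpa only [ghostEl, edgeEl, map_mul, map_zero] using
    RingQuot.mkAlgHom_rel K (LRel.ghostEdgeNe (K := K) (G := G) e f h)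

lemma edge_range (e : G.E) :
    edgeEl K G e * vertexEl K G (G.r e) = edgeEl K G e := by
  simpa only [ghostEl, edgeEl, vertexEl, map_mul] using
    RingQuot.mkAlgHom_rel K (LRel.edgeRange (K := K) (G := G) e)

lemma range_ghost (e : G.E) :
    vertexEl K G (G.r e) * ghostEl K G e = ghostEl K G e := by
  simpa only [ghostEl, edgeEl, vertexEl, map_mul] using
    RingQuot.mkAlgHom_rel K (LRel.rangeGhost (K := K) (G := G) e)

lemma corner_wl {w : G.V} {x : LPA K G} (h : InCorner K G w x) :
    vertexEl K G w * x = x := by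
  conv_lhs => rw [← h]
  rw [← mul_assoc, ← mul_assoc, vertex_idem, h]

lemma corner_wr {w : G.V} {x : LPA K G} (h : InCorner K G w x) :
    x * vertexEl K G w = x := by
  conv_lhs => rw [← h]
  rw [mul_assoc, vertex_idem, h]

lemma extract_entry {n : ℕ} {w : G.V} (es : Fin n → G.E) (hes : Function.Injective es)
    (hr : ∀ i, G.r (es i) = w) (x : Fin n → LPA K G)
    (hx : ∀ k, vertexEl K G w * x k = x k) (j : Fin n) :
    ghostEl K G (es j) * ∑ k, edgeEl K G (es k) * x k = x j := by
  rw [Finset.mul_sum, Finset.sum_eq_single j]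
  · rw [← mul_assoc, ghost_edge_same, hr, hx]
  · intro k _ hk
    rw [← mul_assoc, ghost_edge_ne _ _ (fun h => hk (hes h).symm), zero_mul]
  · intro h; exact absurd (Finset.mem_univ j) h

lemma lpa_alghom_ext {φ ψ : LPA K G →ₐ[K] LPA K G}
    (hv : ∀ u, φ (vertexEl K G u) = ψ (vertexEl K G u))
    (he : ∀ e, φ (edgeEl K G e) = ψ (edgeEl K G e))
    (hg : ∀ e, φ (ghostEl K G e) = ψ (ghostEl K G e)) : φ = ψ := by
  apply RingQuot.ringQuot_ext'
  apply FreeAlgebra.hom_ext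
  funext g
  cases g with
  | vertex u => exact hv u
  | edge e => exact he e
  | ghost e => exact hg e

end Aux

/-- `φ_P = φ_Q` iff `P = Q`; consequently `φ_P = id` iff `P` is the
identity matrix `w·I_n` of `M_n(w L_K(E) w)`. -/
theorem stmt1 (K : Type) [Field K] (G : DirGraph) (n : ℕ) (hn : 0 < n)
    (v w : G.V) (es : Fin n → G.E) (hes : Function.Injective es)
    (hs : ∀ i, G.s (es i) = v) (hr : ∀ i, G.r (es i) = w)
    (P P' Q Q' : Matrix (Fin n) (Fin n) (LPA K G))
    (hP : IsCornerGLPair K G w P P') (hQ : IsCornerGLPair K G w Q Q')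
    (φP φQ : LPA K G →ₐ[K] LPA K G)
    (hφP : PhiProps K G es P P' φP) (hφQ : PhiProps K G es Q Q' φQ) :
    (φP = φQ ↔ P = Q) ∧
    (φP = AlgHom.id K (LPA K G) ↔ P = Matrix.diagonal (fun _ => vertexEl K G w)) := by
  obtain ⟨hPc, hP'c, hPP', hP'P⟩ := hP
  obtain ⟨hQc, hQ'c, hQQ', hQ'Q⟩ := hQ
  set D : Matrix (Fin n) (Fin n) (LPA K G) :=
    Matrix.diagonal (fun _ => vertexEl K G w) with hD
  -- recover the matrix entries from φ
  have hrec : ∀ (R R' : Matrix (Fin n) (Fin n) (LPA K G))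
      (hRc : ∀ i j, InCorner K G w (R i j)) (φ : LPA K G →ₐ[K] LPA K G),
      PhiProps K G es R R' φ →
      ∀ j i, ghostEl K G (es j) * φ (edgeEl K G (es i)) = R j i := by
    intro R R' hRc φ hφ j i
    rw [hφ.2.2.2.1 i]
    exact extract_entry es hes hr (fun k => R k i) (fun k => corner_wl (hRc k i)) j
  -- D absorbs matrices with corner entries
  have hDl : ∀ (R : Matrix (Fin n) (Fin n) (LPA K G)),
      (∀ i j, InCorner K G w (R i j)) → D * R = R := by
    intro R hRc
    ext i j
    rw [hD, Matrix.diagonal_mul]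
    exact corner_wl (hRc i j)
  have hDr : ∀ (R : Matrix (Fin n) (Fin n) (LPA K G)),
      (∀ i j, InCorner K G w (R i j)) → R * D = R := by
    intro R hRc
    ext i j
    rw [hD, Matrix.mul_diagonal]
    exact corner_wr (hRc i j)
  -- inverses are determined
  have hinv : P = Q → P' = Q' := by
    intro h
    calc P' = (Q' * Q) * P' := by rw [hQ'Q, hDl P' hP'c]
      _ = Q' * (P * P') := by rw [mul_assoc, h]
      _ = Q' := by rw [hPP', hDr Q' hQ'c]
  -- equality of φ's from equality of matrices
  have hfun : ∀ (R R' S S' : Matrix (Fin n) (Fin n) (LPA K G))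
      (φ ψ : LPA K G →ₐ[K] LPA K G), PhiProps K G es R R' φ → PhiProps K G es S S' ψ →
      R = S → R' = S' → φ = ψ := by
    intro R R' S S' φ ψ hφ hψ h h'
    apply lpa_alghom_ext
    · intro u; rw [hφ.1, hψ.1]
    · intro e
      by_cases hmem : e ∈ Set.range es
      · obtain ⟨i, rfl⟩ := hmem
        rw [hφ.2.2.2.1 i, hψ.2.2.2.1 i, h]
      · rw [hφ.2.1 e hmem, hψ.2.1 e hmem]
    · intro e
      by_cases hmem : e ∈ Set.range es
      · obtain ⟨i, rfl⟩ := hmem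
        rw [hφ.2.2.2.2 i, hψ.2.2.2.2 i, h']
      · rw [hφ.2.2.1 e hmem, hψ.2.2.1 e hmem]
  constructor
  · constructor
    · intro h
      ext j i
      rw [← hrec P P' hPc φP hφP j i, ← hrec Q Q' hQc φQ hφQ j i, h]
    · intro h
      exact hfun P P' Q Q' φP φQ hφP hφQ h (hinv h)
  · constructor
    · intro h
      ext j i
      rw [← hrec P P' hPc φP hφP j i, h]
      simp only [AlgHom.id_apply, hD, Matrix.diagonal_apply]
      by_cases hji : j = i
      · subst hji
        rw [if_pos rfl, ghost_edge_same, hr]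
      · rw [if_neg hji, ghost_edge_ne _ _ (fun hh => hji (hes hh))]
    · intro h
      -- P = D forces P' = D
      have hP'D : P' = D := by
        calc P' = D * P' := (hDl P' hP'c).symm
          _ = P * P' := by rw [h]
          _ = D := hPP'
      apply lpa_alghom_ext
      · intro u; rw [hφP.1, AlgHom.id_apply]
      · intro e
        rw [AlgHom.id_apply]
        by_cases hmem : e ∈ Set.range es
        · obtain ⟨i, rfl⟩ := hmem
          rw [hφP.2.2.2.1 i, h, Finset.sum_eq_single i]
          · rw [hD, Matrix.diagonal_apply_eq, ← hr i, edge_range]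
          · intro k _ hk
            rw [hD, Matrix.diagonal_apply_ne _ hk, mul_zero]
          · intro hh; exact absurd (Finset.mem_univ i) hh
        · exact hφP.2.1 e hmem
      · intro e
        rw [AlgHom.id_apply]
        by_cases hmem : e ∈ Set.range es
        · obtain ⟨i, rfl⟩ := hmem
          rw [hφP.2.2.2.2 i, hP'D, Finset.sum_eq_single i]
          · rw [hD, Matrix.diagonal_apply_eq, ← hr i, range_ghost]
          · intro k _ hk
            rw [hD, Matrix.diagonal_apply_ne _ hk.symm, zero_mul]
          · intro hh; exact absurd (Finset.mem_univ i) hh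
        · exact hφP.2.2.1 e hmem
end

section
/- Let n ≥ 2 be an integer, K a field, and R_n the rose graph with n petals. Then the map Φ : GL_n(K) → Aut^{gr}(L_K(R_n)), P ↦ φ_P, is an injective group homomorphism from the general linear group GL_n(K) into the group of graded K-algebra automorphisms of L_K(R_n). -/
/-- Generators of the Leavitt path algebra of the rose with `n` petals:
the edges `e_1, …, e_n` and the ghost edges `e_1*, …, e_n*` (the single vertex `v` is the
identity `1`). -/
inductive RGen (n : ℕ) : Type
  | e : Fin n → RGen n
  | g : Fin n → RGen n

/-- The defining relations of `L_K(R_n)`: `e_i* e_j = δ_{ij} v` and `Σ_i e_i e_i* = v`,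
where `v = 1`. -/
inductive RoseRel (K : Type) [Field K] (n : ℕ) :
    FreeAlgebra K (RGen n) → FreeAlgebra K (RGen n) → Prop
  | ghostEdgeSame (i : Fin n) :
      RoseRel K n (FreeAlgebra.ι K (RGen.g i) * FreeAlgebra.ι K (RGen.e i)) 1
  | ghostEdgeNe (i j : Fin n) (h : i ≠ j) :
      RoseRel K n (FreeAlgebra.ι K (RGen.g i) * FreeAlgebra.ι K (RGen.e j)) 0
  | ck2 :
      RoseRel K n (∑ i : Fin n, FreeAlgebra.ι K (RGen.e i) * FreeAlgebra.ι K (RGen.g i)) 1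

/-- The Leavitt path algebra `L_K(R_n)` of the rose with `n` petals. -/
abbrev LRose (K : Type) [Field K] (n : ℕ) : Type := RingQuot (RoseRel K n)

/-- The edge `e_i` as an element of `L_K(R_n)`. -/
noncomputable def ee (K : Type) [Field K] (n : ℕ) (i : Fin n) : LRose K n :=
  RingQuot.mkAlgHom K (RoseRel K n) (FreeAlgebra.ι K (RGen.e i))

/-- The ghost edge `e_i*` as an element of `L_K(R_n)`. -/
noncomputable def gg (K : Type) [Field K] (n : ℕ) (i : Fin n) : LRose K n :=
  RingQuot.mkAlgHom K (RoseRel K n) (FreeAlgebra.ι K (RGen.g i))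

/-- The degree `d` component of the ℤ-grading of `L_K(R_n)`: the `K`-span of the
elements `p q*` with `|p| - |q| = d`. -/
noncomputable def rComponent (K : Type) [Field K] (n : ℕ) (d : ℤ) :
    Submodule K (LRose K n) :=
  Submodule.span K {x : LRose K n | ∃ p q : List (Fin n),
    (p.length : ℤ) - (q.length : ℤ) = d ∧
    x = (p.map (ee K n)).prod * (q.reverse.map (gg K n)).prod}

/-- A map is graded when it preserves every homogeneous component. -/
def RGraded (K : Type) [Field K] (n : ℕ) (f : LRose K n → LRose K n) : Prop :=
  ∀ d : ℤ, ∀ x ∈ rComponent K n d, f x ∈ rComponent K n d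

/-- The defining property of the endomorphism `φ_P` of `L_K(R_n)` attached to a matrix
`P` with inverse `P'`: it sends `e_i ↦ Σ_k e_k p_{k i}` and `e_i* ↦ Σ_k p'_{i k} e_k*`
(and `v = 1 ↦ 1` automatically). -/
def RPhiProps (K : Type) [Field K] (n : ℕ) (P P' : Matrix (Fin n) (Fin n) (LRose K n))
    (φ : LRose K n →ₐ[K] LRose K n) : Prop :=
  (∀ i, φ (ee K n i) = ∑ k, ee K n k * P k i) ∧
  (∀ i, φ (gg K n i) = ∑ k, P' i k * gg K n k)

namespace Stmt7Aux

variable (K : Type) [Field K] (n : ℕ)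

lemma gg_mul_ee (i j : Fin n) :
    gg K n i * ee K n j = if i = j then 1 else 0 := by
  by_cases h : i = j
  · subst h
    rw [if_pos rfl, gg, ee, ← map_mul,
      RingQuot.mkAlgHom_rel K (RoseRel.ghostEdgeSame i), map_one]
  · rw [if_neg h, gg, ee, ← map_mul,
      RingQuot.mkAlgHom_rel K (RoseRel.ghostEdgeNe i j h), map_zero]

lemma sum_ee_gg : ∑ i, ee K n i * gg K n i = 1 := by
  have := RingQuot.mkAlgHom_rel K (RoseRel.ck2 (K := K) (n := n))
  simpa [ee, gg, map_sum, map_mul] using this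

lemma lrose_hom_ext {A : Type} [Semiring A] [Algebra K A] {φ ψ : LRose K n →ₐ[K] A}
    (he : ∀ i, φ (ee K n i) = ψ (ee K n i)) (hg : ∀ i, φ (gg K n i) = ψ (gg K n i)) :
    φ = ψ := by
  apply RingQuot.ringQuot_ext'
  apply FreeAlgebra.hom_ext
  funext x
  cases x with
  | e i => simpa [ee] using he i
  | g i => simpa [gg] using hg i

/-- Collapse lemma for `g`-sum times `e`-sum. -/
lemma gsum_mul_esum (P P' : Matrix (Fin n) (Fin n) K) (i j : Fin n) :
    (∑ k, algebraMap K (LRose K n) (P' i k) * gg K n k) *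
      (∑ l, ee K n l * algebraMap K (LRose K n) (P l j))
    = algebraMap K (LRose K n) ((P' * P) i j) := by
  rw [Finset.sum_mul_sum, Matrix.mul_apply, map_sum]
  refine Finset.sum_congr rfl fun k _ => ?_
  rw [Finset.sum_eq_single k]
  · rw [mul_assoc, ← mul_assoc (gg K n k), gg_mul_ee, if_pos rfl, one_mul, ← map_mul]
  · intro l _ hlk
    rw [mul_assoc, ← mul_assoc (gg K n k), gg_mul_ee, if_neg fun h => hlk h.symm,
      zero_mul, mul_zero]
  · intro h; exact absurd (Finset.mem_univ k) h

lemma esum_mul_gsum (P P' : Matrix (Fin n) (Fin n) K) (h : P * P' = 1) :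
    ∑ i, (∑ k, ee K n k * algebraMap K (LRose K n) (P k i)) *
      (∑ l, algebraMap K (LRose K n) (P' i l) * gg K n l) = 1 := by
  calc ∑ i, (∑ k, ee K n k * algebraMap K (LRose K n) (P k i)) *
        (∑ l, algebraMap K (LRose K n) (P' i l) * gg K n l)
      = ∑ i, ∑ k, ∑ l,
          ee K n k * (algebraMap K (LRose K n) (P k i * P' i l) * gg K n l) := by
        refine Finset.sum_congr rfl fun i _ => ?_
        rw [Finset.sum_mul_sum]
        refine Finset.sum_congr rfl fun k _ => Finset.sum_congr rfl fun l _ => ?_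
        simp only [map_mul, mul_assoc]
    _ = ∑ k, ∑ l, ee K n k * (algebraMap K (LRose K n) ((P * P') k l) * gg K n l) := by
        rw [Finset.sum_comm]
        refine Finset.sum_congr rfl fun k _ => ?_
        rw [Finset.sum_comm]
        refine Finset.sum_congr rfl fun l _ => ?_
        rw [Matrix.mul_apply, map_sum, Finset.sum_mul, ← Finset.mul_sum]
    _ = 1 := by
        rw [h]
        simp only [Matrix.one_apply, apply_ite (algebraMap K (LRose K n)), map_one,
          map_zero, ite_mul, one_mul, zero_mul, mul_ite, mul_zero]
        rw [Finset.sum_congr rfl fun k _ => Finset.sum_ite_eq (Finset.univ) k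
          (fun l => ee K n k * gg K n l)]
        simp [sum_ee_gg]

noncomputable def rawPhi (P P' : Matrix (Fin n) (Fin n) K) :
    FreeAlgebra K (RGen n) →ₐ[K] LRose K n :=
  FreeAlgebra.lift K fun x => match x with
    | RGen.e i => ∑ k, ee K n k * algebraMap K (LRose K n) (P k i)
    | RGen.g i => ∑ k, algebraMap K (LRose K n) (P' i k) * gg K n k

lemma rawPhi_e (P P' : Matrix (Fin n) (Fin n) K) (i : Fin n) :
    rawPhi K n P P' (FreeAlgebra.ι K (RGen.e i))
      = ∑ k, ee K n k * algebraMap K (LRose K n) (P k i) := by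
  rw [rawPhi, FreeAlgebra.lift_ι_apply]

lemma rawPhi_g (P P' : Matrix (Fin n) (Fin n) K) (i : Fin n) :
    rawPhi K n P P' (FreeAlgebra.ι K (RGen.g i))
      = ∑ k, algebraMap K (LRose K n) (P' i k) * gg K n k := by
  rw [rawPhi, FreeAlgebra.lift_ι_apply]

lemma rawPhi_rel (P P' : Matrix (Fin n) (Fin n) K) (h1 : P' * P = 1) (h2 : P * P' = 1) :
    ∀ ⦃x y : FreeAlgebra K (RGen n)⦄, RoseRel K n x y → rawPhi K n P P' x = rawPhi K n P P' y := by
  intro x y hxy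
  induction hxy with
  | ghostEdgeSame i =>
      rw [map_mul, map_one, rawPhi_g, rawPhi_e, gsum_mul_esum, h1, Matrix.one_apply_eq, map_one]
  | ghostEdgeNe i j h =>
      rw [map_mul, map_zero, rawPhi_g, rawPhi_e, gsum_mul_esum, h1, Matrix.one_apply_ne h,
        map_zero]
  | ck2 =>
      rw [map_sum, map_one]
      calc ∑ i, rawPhi K n P P' (FreeAlgebra.ι K (RGen.e i) * FreeAlgebra.ι K (RGen.g i))
          = ∑ i, (∑ k, ee K n k * algebraMap K (LRose K n) (P k i)) *
              (∑ l, algebraMap K (LRose K n) (P' i l) * gg K n l) := by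
            refine Finset.sum_congr rfl fun i _ => ?_
            rw [map_mul, rawPhi_e, rawPhi_g]
        _ = 1 := esum_mul_gsum K n P P' h2

noncomputable def phiP (P P' : Matrix (Fin n) (Fin n) K) (h1 : P' * P = 1) (h2 : P * P' = 1) :
    LRose K n →ₐ[K] LRose K n :=
  RingQuot.liftAlgHom K ⟨rawPhi K n P P', rawPhi_rel K n P P' h1 h2⟩

lemma phiP_ee (P P' : Matrix (Fin n) (Fin n) K) (h1 : P' * P = 1) (h2 : P * P' = 1) (i : Fin n) :
    phiP K n P P' h1 h2 (ee K n i) = ∑ k, ee K n k * algebraMap K (LRose K n) (P k i) := by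
  rw [phiP, ee, RingQuot.liftAlgHom_mkAlgHom_apply, rawPhi_e]

lemma phiP_gg (P P' : Matrix (Fin n) (Fin n) K) (h1 : P' * P = 1) (h2 : P * P' = 1) (i : Fin n) :
    phiP K n P P' h1 h2 (gg K n i) = ∑ k, algebraMap K (LRose K n) (P' i k) * gg K n k := by
  rw [phiP, gg, RingQuot.liftAlgHom_mkAlgHom_apply, rawPhi_g]

lemma sum_collapse_e (P Q : Matrix (Fin n) (Fin n) K) (i : Fin n) :
    ∑ k, (∑ l, ee K n l * algebraMap K (LRose K n) (P l k)) * algebraMap K (LRose K n) (Q k i)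
      = ∑ l, ee K n l * algebraMap K (LRose K n) ((P * Q) l i) := by
  simp only [Finset.sum_mul, mul_assoc, ← map_mul]
  rw [Finset.sum_comm]
  simp only [← Finset.mul_sum, ← map_sum, Matrix.mul_apply]

lemma sum_collapse_g (P Q : Matrix (Fin n) (Fin n) K) (i : Fin n) :
    ∑ k, algebraMap K (LRose K n) (Q i k) * (∑ l, algebraMap K (LRose K n) (P k l) * gg K n l)
      = ∑ l, algebraMap K (LRose K n) ((Q * P) i l) * gg K n l := by
  simp only [Finset.mul_sum, ← mul_assoc, ← map_mul]
  rw [Finset.sum_comm]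
  simp only [← Finset.sum_mul, ← map_sum, Matrix.mul_apply]

lemma phiP_phiP_ee (P P' Q Q' : Matrix (Fin n) (Fin n) K)
    (h1 : P' * P = 1) (h2 : P * P' = 1) (g1 : Q' * Q = 1) (g2 : Q * Q' = 1) (i : Fin n) :
    phiP K n P P' h1 h2 (phiP K n Q Q' g1 g2 (ee K n i))
      = ∑ l, ee K n l * algebraMap K (LRose K n) ((P * Q) l i) := by
  rw [phiP_ee, map_sum]
  simp only [map_mul, AlgHom.commutes, phiP_ee]
  exact sum_collapse_e K n P Q i

lemma phiP_phiP_gg (P P' Q Q' : Matrix (Fin n) (Fin n) K)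
    (h1 : P' * P = 1) (h2 : P * P' = 1) (g1 : Q' * Q = 1) (g2 : Q * Q' = 1) (i : Fin n) :
    phiP K n P P' h1 h2 (phiP K n Q Q' g1 g2 (gg K n i))
      = ∑ l, algebraMap K (LRose K n) ((Q' * P') i l) * gg K n l := by
  rw [phiP_gg, map_sum]
  simp only [map_mul, AlgHom.commutes, phiP_gg]
  exact sum_collapse_g K n P' Q' i

lemma sum_one_e (i : Fin n) :
    ∑ l, ee K n l * algebraMap K (LRose K n) ((1 : Matrix (Fin n) (Fin n) K) l i) = ee K n i := by
  simp [Matrix.one_apply, apply_ite (algebraMap K (LRose K n))]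

lemma sum_one_g (i : Fin n) :
    ∑ l, algebraMap K (LRose K n) ((1 : Matrix (Fin n) (Fin n) K) i l) * gg K n l = gg K n i := by
  simp [Matrix.one_apply, apply_ite (algebraMap K (LRose K n))]

noncomputable def toAut (P : GL (Fin n) K) : LRose K n ≃ₐ[K] LRose K n :=
  AlgEquiv.ofAlgHom
    (phiP K n (↑P) (↑P⁻¹) P.inv_mul P.mul_inv)
    (phiP K n (↑P⁻¹) (↑P) P.mul_inv P.inv_mul)
    (by
      apply lrose_hom_ext
      · intro i
        rw [AlgHom.comp_apply, AlgHom.id_apply, phiP_phiP_ee, P.mul_inv, sum_one_e]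
      · intro i
        rw [AlgHom.comp_apply, AlgHom.id_apply, phiP_phiP_gg, P.mul_inv, sum_one_g])
    (by
      apply lrose_hom_ext
      · intro i
        rw [AlgHom.comp_apply, AlgHom.id_apply, phiP_phiP_ee, P.inv_mul, sum_one_e]
      · intro i
        rw [AlgHom.comp_apply, AlgHom.id_apply, phiP_phiP_gg, P.inv_mul, sum_one_g])

lemma toAut_apply_ee (P : GL (Fin n) K) (i : Fin n) :
    toAut K n P (ee K n i)
      = ∑ k, ee K n k * algebraMap K (LRose K n) ((P : Matrix (Fin n) (Fin n) K) k i) :=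
  phiP_ee K n _ _ _ _ i

lemma toAut_apply_gg (P : GL (Fin n) K) (i : Fin n) :
    toAut K n P (gg K n i)
      = ∑ k, algebraMap K (LRose K n)
          (((P⁻¹ : GL (Fin n) K) : Matrix (Fin n) (Fin n) K) i k) * gg K n k :=
  phiP_gg K n _ _ _ _ i

noncomputable def Phi : GL (Fin n) K →* (LRose K n ≃ₐ[K] LRose K n) where
  toFun := toAut K n
  map_one' := by
    apply AlgEquiv.coe_algHom_injective
    apply lrose_hom_ext
    · intro i
      show toAut K n 1 (ee K n i) = (1 : LRose K n ≃ₐ[K] LRose K n) (ee K n i)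
      rw [toAut_apply_ee, AlgEquiv.one_apply]
      exact sum_one_e K n i
    · intro i
      show toAut K n 1 (gg K n i) = (1 : LRose K n ≃ₐ[K] LRose K n) (gg K n i)
      rw [toAut_apply_gg, AlgEquiv.one_apply]
      exact sum_one_g K n i
  map_mul' := by
    intro P Q
    apply AlgEquiv.coe_algHom_injective
    apply lrose_hom_ext
    · intro i
      show toAut K n (P * Q) (ee K n i) = toAut K n P (toAut K n Q (ee K n i))
      rw [toAut_apply_ee]
      show _ = phiP K n (↑P) (↑P⁻¹) P.inv_mul P.mul_inv
        (phiP K n (↑Q) (↑Q⁻¹) Q.inv_mul Q.mul_inv (ee K n i))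
      rw [phiP_phiP_ee]
      rfl
    · intro i
      show toAut K n (P * Q) (gg K n i) = toAut K n P (toAut K n Q (gg K n i))
      rw [toAut_apply_gg]
      show _ = phiP K n (↑P) (↑P⁻¹) P.inv_mul P.mul_inv
        (phiP K n (↑Q) (↑Q⁻¹) Q.inv_mul Q.mul_inv (gg K n i))
      rw [phiP_phiP_gg]
      rfl

end Stmt7Aux

namespace Stmt7Aux

variable (K : Type) [Field K] (n : ℕ)

noncomputable def Srep (E : ℕ ≃ ℕ × Fin n) (i : Fin n) : Module.End K (ℕ →₀ K) :=
  Finsupp.lmapDomain K K (fun m => E.symm (m, i))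

noncomputable def Trep (E : ℕ ≃ ℕ × Fin n) (i : Fin n) : Module.End K (ℕ →₀ K) :=
  Finsupp.lsum K (fun k => if (E k).2 = i then Finsupp.lsingle (E k).1 else 0)

lemma Srep_single (E : ℕ ≃ ℕ × Fin n) (i : Fin n) (m : ℕ) (c : K) :
    Srep K n E i (Finsupp.single m c) = Finsupp.single (E.symm (m, i)) c := by
  rw [Srep, Finsupp.lmapDomain_apply, Finsupp.mapDomain_single]

lemma Trep_single (E : ℕ ≃ ℕ × Fin n) (i : Fin n) (k : ℕ) (c : K) :
    Trep K n E i (Finsupp.single k c)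
      = if (E k).2 = i then Finsupp.single (E k).1 c else 0 := by
  rw [Trep, Finsupp.lsum_single]
  split <;> simp

lemma TS_same (E : ℕ ≃ ℕ × Fin n) (i : Fin n) : Trep K n E i * Srep K n E i = 1 := by
  apply Finsupp.lhom_ext
  intro m c
  rw [Module.End.mul_apply, Srep_single, Trep_single, Equiv.apply_symm_apply]
  simp

lemma TS_ne (E : ℕ ≃ ℕ × Fin n) (i j : Fin n) (h : i ≠ j) :
    Trep K n E i * Srep K n E j = 0 := by
  apply Finsupp.lhom_ext
  intro m c
  rw [Module.End.mul_apply, Srep_single, Trep_single, Equiv.apply_symm_apply]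
  simp [h.symm]

lemma sum_ST (E : ℕ ≃ ℕ × Fin n) : ∑ i, Srep K n E i * Trep K n E i = 1 := by
  apply Finsupp.lhom_ext
  intro k c
  rw [LinearMap.sum_apply]
  have : ∀ i, (Srep K n E i * Trep K n E i) (Finsupp.single k c)
      = if (E k).2 = i then Finsupp.single (E.symm ((E k).1, i)) c else 0 := by
    intro i
    rw [Module.End.mul_apply, Trep_single]
    split
    · rw [Srep_single]
    · rw [map_zero]
  rw [Finset.sum_congr rfl fun i _ => this i]
  rw [Finset.sum_ite_eq Finset.univ (E k).2 (fun i => Finsupp.single (E.symm ((E k).1, i)) c)]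
  simp

noncomputable def rawRep (E : ℕ ≃ ℕ × Fin n) :
    FreeAlgebra K (RGen n) →ₐ[K] Module.End K (ℕ →₀ K) :=
  FreeAlgebra.lift K fun x => match x with
    | RGen.e i => Srep K n E i
    | RGen.g i => Trep K n E i

lemma rawRep_rel (E : ℕ ≃ ℕ × Fin n) :
    ∀ ⦃x y : FreeAlgebra K (RGen n)⦄, RoseRel K n x y → rawRep K n E x = rawRep K n E y := by
  intro x y hxy
  have he : ∀ i, rawRep K n E (FreeAlgebra.ι K (RGen.e i)) = Srep K n E i := fun i => by
    rw [rawRep, FreeAlgebra.lift_ι_apply]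
  have hg : ∀ i, rawRep K n E (FreeAlgebra.ι K (RGen.g i)) = Trep K n E i := fun i => by
    rw [rawRep, FreeAlgebra.lift_ι_apply]
  induction hxy with
  | ghostEdgeSame i => rw [map_mul, map_one, he, hg, TS_same]
  | ghostEdgeNe i j h => rw [map_mul, map_zero, he, hg, TS_ne K n E i j h]
  | ck2 =>
      rw [map_sum, map_one, Finset.sum_congr rfl fun i _ => by rw [map_mul, he, hg], sum_ST]

noncomputable def rep (E : ℕ ≃ ℕ × Fin n) : LRose K n →ₐ[K] Module.End K (ℕ →₀ K) :=
  RingQuot.liftAlgHom K ⟨rawRep K n E, rawRep_rel K n E⟩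

lemma lrose_nontrivial (hn : n ≠ 0) : Nontrivial (LRose K n) := by
  haveI : NeZero n := ⟨hn⟩
  refine ⟨1, 0, fun h => ?_⟩
  have h2 : (1 : Module.End K (ℕ →₀ K)) = 0 := by
    have := congrArg (rep K n (Nat.divModEquiv n)) h
    simpa using this
  have h3 := LinearMap.congr_fun h2 (Finsupp.single 0 (1 : K))
  simp [Finsupp.single_eq_zero] at h3

/-! ### Grading -/

noncomputable def rmono (p q : List (Fin n)) : LRose K n :=
  (p.map (ee K n)).prod * (q.reverse.map (gg K n)).prod

noncomputable def rComp2 (a b : ℕ) : Submodule K (LRose K n) :=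
  Submodule.span K {x : LRose K n | ∃ p q : List (Fin n),
    p.length = a ∧ q.length = b ∧ x = rmono K n p q}

noncomputable def Espan : Submodule K (LRose K n) := Submodule.span K (Set.range (ee K n))
noncomputable def Gspan : Submodule K (LRose K n) := Submodule.span K (Set.range (gg K n))

lemma rComp2_le (a b : ℕ) (d : ℤ) (hd : (a : ℤ) - (b : ℤ) = d) :
    rComp2 K n a b ≤ rComponent K n d := by
  apply Submodule.span_mono
  rintro x ⟨p, q, hp, hq, rfl⟩
  exact ⟨p, q, by rw [hp, hq]; exact hd, rfl⟩

lemma rmono_cons_e (i : Fin n) (p q : List (Fin n)) :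
    ee K n i * rmono K n p q = rmono K n (i :: p) q := by
  rw [rmono, rmono, List.map_cons, List.prod_cons, mul_assoc]

lemma rmono_cons_g (i : Fin n) (p q : List (Fin n)) :
    rmono K n p q * gg K n i = rmono K n p (i :: q) := by
  rw [rmono, rmono, List.reverse_cons, List.map_append, List.prod_append]
  simp [mul_assoc]

lemma rmono_g_left (i : Fin n) (q : List (Fin n)) :
    gg K n i * rmono K n [] q = rmono K n [] (q ++ [i]) := by
  rw [rmono, rmono, List.reverse_append]
  simp [mul_assoc]

lemma mul_E_mem {a b : ℕ} {c x : LRose K n} (hc : c ∈ Espan K n) (hx : x ∈ rComp2 K n a b) :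
    c * x ∈ rComp2 K n (a + 1) b := by
  have hle : Espan K n * rComp2 K n a b ≤ rComp2 K n (a + 1) b := by
    rw [Espan, rComp2, Submodule.span_mul_span]
    apply Submodule.span_mono
    rintro z ⟨u, ⟨i, rfl⟩, v, ⟨p, q, hp, hq, rfl⟩, rfl⟩
    exact ⟨i :: p, q, by simp [hp], hq, rmono_cons_e K n i p q⟩
  exact hle (Submodule.mul_mem_mul hc hx)

lemma mul_G_mem {a b : ℕ} {c x : LRose K n} (hx : x ∈ rComp2 K n a b) (hc : c ∈ Gspan K n) :
    x * c ∈ rComp2 K n a (b + 1) := by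
  have hle : rComp2 K n a b * Gspan K n ≤ rComp2 K n a (b + 1) := by
    rw [Gspan, rComp2, Submodule.span_mul_span]
    apply Submodule.span_mono
    rintro z ⟨v, ⟨p, q, hp, hq, rfl⟩, u, ⟨i, rfl⟩, rfl⟩
    exact ⟨p, i :: q, hp, by simp [hq], rmono_cons_g K n i p q⟩
  exact hle (Submodule.mul_mem_mul hx hc)

lemma mul_G_left_mem {b : ℕ} {c x : LRose K n} (hc : c ∈ Gspan K n)
    (hx : x ∈ rComp2 K n 0 b) : c * x ∈ rComp2 K n 0 (b + 1) := by
  have hle : Gspan K n * rComp2 K n 0 b ≤ rComp2 K n 0 (b + 1) := by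
    rw [Gspan, rComp2, Submodule.span_mul_span]
    apply Submodule.span_mono
    rintro z ⟨u, ⟨i, rfl⟩, v, ⟨p, q, hp, hq, rfl⟩, rfl⟩
    have hp0 : p = [] := List.length_eq_zero_iff.mp hp
    subst hp0
    exact ⟨[], q ++ [i], rfl, by simp [hq], rmono_g_left K n i q⟩
  exact hle (Submodule.mul_mem_mul hc hx)

lemma rmono_nil_nil : rmono K n [] [] = 1 := by simp [rmono]

lemma one_mem_rComp2 : (1 : LRose K n) ∈ rComp2 K n 0 0 :=
  Submodule.subset_span ⟨[], [], rfl, rfl, (rmono_nil_nil K n).symm⟩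

lemma listG_mem (ys : List (LRose K n)) (h : ∀ y ∈ ys, y ∈ Gspan K n) :
    ys.prod ∈ rComp2 K n 0 ys.length := by
  induction ys with
  | nil => simpa using one_mem_rComp2 K n
  | cons y ys ih =>
      rw [List.prod_cons, List.length_cons]
      exact mul_G_left_mem K n (h y List.mem_cons_self)
        (ih fun z hz => h z (List.mem_cons_of_mem y hz))

lemma prodEG (xs ys : List (LRose K n)) (hx : ∀ x ∈ xs, x ∈ Espan K n)
    (hy : ∀ y ∈ ys, y ∈ Gspan K n) :
    xs.prod * ys.prod ∈ rComp2 K n xs.length ys.length := by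
  induction xs with
  | nil => simpa using listG_mem K n ys hy
  | cons x xs ih =>
      rw [List.prod_cons, List.length_cons, mul_assoc]
      exact mul_E_mem K n (hx x List.mem_cons_self)
        (ih fun z hz => hx z (List.mem_cons_of_mem x hz))

lemma hom_graded (φ : LRose K n →ₐ[K] LRose K n)
    (he : ∀ i, φ (ee K n i) ∈ Espan K n) (hg : ∀ i, φ (gg K n i) ∈ Gspan K n) :
    RGraded K n ⇑φ := by
  intro d x hx
  induction hx using Submodule.span_induction with
  | mem x h =>
      obtain ⟨p, q, hd, rfl⟩ := h
      rw [map_mul, map_list_prod, map_list_prod, List.map_map, List.map_map]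
      have hmem := prodEG K n (p.map (⇑φ ∘ ee K n)) (q.reverse.map (⇑φ ∘ gg K n))
        (by intro x hx; obtain ⟨i, hi, rfl⟩ := List.mem_map.mp hx; exact he i)
        (by intro y hy; obtain ⟨i, hi, rfl⟩ := List.mem_map.mp hy; exact hg i)
      apply rComp2_le K n p.length q.length d hd
      simpa using hmem
  | zero => simpa using Submodule.zero_mem _
  | add x y hx hy ihx ihy => rw [map_add]; exact Submodule.add_mem _ ihx ihy
  | smul a x hx ih => rw [map_smul]; exact Submodule.smul_mem _ _ ih

lemma mem_Espan (P : Matrix (Fin n) (Fin n) K) (i : Fin n) :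
    (∑ k, ee K n k * algebraMap K (LRose K n) (P k i)) ∈ Espan K n := by
  refine Submodule.sum_mem _ fun k _ => ?_
  rw [← Algebra.commutes, ← Algebra.smul_def]
  exact Submodule.smul_mem _ _ (Submodule.subset_span ⟨k, rfl⟩)

lemma mem_Gspan (P' : Matrix (Fin n) (Fin n) K) (i : Fin n) :
    (∑ k, algebraMap K (LRose K n) (P' i k) * gg K n k) ∈ Gspan K n := by
  refine Submodule.sum_mem _ fun k _ => ?_
  rw [← Algebra.smul_def]
  exact Submodule.smul_mem _ _ (Submodule.subset_span ⟨k, rfl⟩)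

end Stmt7Aux


/-- The map `Φ : GL_n(K) → Aut^{gr}(L_K(R_n))`, `P ↦ φ_P`, is an
injective group homomorphism. -/
theorem stmt7 (K : Type) [Field K] (n : ℕ) (hn : 2 ≤ n) :
    ∃ Φ : GL (Fin n) K →* (LRose K n ≃ₐ[K] LRose K n),
      Function.Injective ⇑Φ ∧
      ∀ P : GL (Fin n) K,
        RGraded K n ⇑(Φ P) ∧
        (∀ i, (Φ P) (ee K n i) =
          ∑ k, ee K n k * algebraMap K (LRose K n) ((P : Matrix (Fin n) (Fin n) K) k i)) ∧
        (∀ i, (Φ P) (gg K n i) =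
          ∑ k, algebraMap K (LRose K n) (((P⁻¹ : GL (Fin n) K) : Matrix (Fin n) (Fin n) K) i k)
            * gg K n k) := by
  classical
  haveI : Nontrivial (LRose K n) := Stmt7Aux.lrose_nontrivial K n (by omega)
  refine ⟨Stmt7Aux.Phi K n, ?_, fun P => ⟨?_, ?_, ?_⟩⟩
  · intro P Q h
    have key : ∀ i j, (P : Matrix (Fin n) (Fin n) K) j i = (Q : Matrix (Fin n) (Fin n) K) j i := by
      intro i j
      have h1 : Stmt7Aux.toAut K n P (ee K n i) = Stmt7Aux.toAut K n Q (ee K n i) := by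
        rw [show Stmt7Aux.toAut K n P = Stmt7Aux.Phi K n P from rfl,
          show Stmt7Aux.toAut K n Q = Stmt7Aux.Phi K n Q from rfl, h]
      rw [Stmt7Aux.toAut_apply_ee, Stmt7Aux.toAut_apply_ee] at h1
      have h2 := congrArg (fun x => gg K n j * x) h1
      simp only [Finset.mul_sum, ← mul_assoc, Stmt7Aux.gg_mul_ee, ite_mul, one_mul,
        zero_mul] at h2
      rw [Finset.sum_ite_eq Finset.univ j, Finset.sum_ite_eq Finset.univ j] at h2
      simp only [Finset.mem_univ, if_true] at h2
      exact (algebraMap K (LRose K n)).injective h2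
    exact Matrix.GeneralLinearGroup.ext fun i j => key j i
  · exact Stmt7Aux.hom_graded K n (Stmt7Aux.toAut K n P : LRose K n →ₐ[K] LRose K n)
      (fun i => by
        rw [show ((Stmt7Aux.toAut K n P : LRose K n →ₐ[K] LRose K n) (ee K n i))
            = Stmt7Aux.toAut K n P (ee K n i) from rfl, Stmt7Aux.toAut_apply_ee]
        exact Stmt7Aux.mem_Espan K n _ i)
      (fun i => by
        rw [show ((Stmt7Aux.toAut K n P : LRose K n →ₐ[K] LRose K n) (gg K n i))
            = Stmt7Aux.toAut K n P (gg K n i) from rfl, Stmt7Aux.toAut_apply_gg]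
        exact Stmt7Aux.mem_Gspan K n _ i)
  · exact Stmt7Aux.toAut_apply_ee K n P
  · exact Stmt7Aux.toAut_apply_gg K n P
end

section
/- Let n ≥ 2 be an integer, K a field, and R_n the rose graph with n petals. Then the map Φ : (A_{R_n}(e_1, e_2), +) → Aut(L_K(R_n)), p ↦ φ_{U_p}, is an injective group homomorphism from the additive group of A_{R_n}(e_1, e_2) into the automorphism group of L_K(R_n); moreover, its restriction to the additive group A_{R_n}(e_1, e_2) ∩ L_K(R_n)_0 is an injective group homomorphism into the group Aut^{gr}(L_K(R_n)) of graded automorphisms. -/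
/-- The subalgebra `A_{R_n}(e_1, e_2)` of `L_K(R_n)`, generated by
`v (= 1), e_1, e_3, …, e_n, e_2*, …, e_n*` (with `0`-based indices: all `e_i` with
`i ≠ 1` and all `e_j*` with `j ≠ 0`). -/
noncomputable def roseA (K : Type) [Field K] (n : ℕ) : Subalgebra K (LRose K n) :=
  Algebra.adjoin K
    {x : LRose K n | (∃ i : Fin n, (i : ℕ) ≠ 1 ∧ x = ee K n i) ∨
      (∃ j : Fin n, (j : ℕ) ≠ 0 ∧ x = gg K n j)}

namespace Stmt8

variable {K : Type} [Field K] {n : ℕ}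

lemma gmul (i j : Fin n) : gg K n i * ee K n j = if i = j then (1 : LRose K n) else 0 := by
  rw [gg, ee, ← map_mul]
  split_ifs with h
  · subst h
    rw [RingQuot.mkAlgHom_rel K (RoseRel.ghostEdgeSame i), map_one]
  · rw [RingQuot.mkAlgHom_rel K (RoseRel.ghostEdgeNe i j h), map_zero]

lemma gmul' (i j : Fin n) (x : LRose K n) :
    gg K n i * (ee K n j * x) = if i = j then x else 0 := by
  rw [← mul_assoc, gmul]
  split_ifs <;> simp

lemma sum_eg : (∑ i : Fin n, ee K n i * gg K n i) = 1 := by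
  have h := RingQuot.mkAlgHom_rel K (RoseRel.ck2 (K := K) (n := n))
  simpa [ee, gg, map_sum, map_mul] using h

/-- image of `e_i` -/
noncomputable def Es (hn : 2 ≤ n) (p : LRose K n) (i : Fin n) : LRose K n :=
  if (i : ℕ) = 1 then ee K n i + ee K n ⟨0, by linarith⟩ * p else ee K n i

/-- image of `e_j*` -/
noncomputable def Gs (hn : 2 ≤ n) (p : LRose K n) (j : Fin n) : LRose K n :=
  if (j : ℕ) = 0 then gg K n j - p * gg K n ⟨1, by linarith⟩ else gg K n j

noncomputable def Efun (hn : 2 ≤ n) (p : LRose K n) : RGen n → LRose K n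
  | .e i => Es hn p i
  | .g j => Gs hn p j

lemma GsEs (hn : 2 ≤ n) (p : LRose K n) (i j : Fin n) :
    Gs hn p i * Es hn p j = if i = j then (1 : LRose K n) else 0 := by
  obtain ⟨iv, hiv⟩ := i
  obtain ⟨jv, hjv⟩ := j
  unfold Gs Es
  by_cases hi : iv = 0 <;> by_cases hj : jv = 1 <;>
    simp [hi, hj, Fin.mk.injEq, sub_mul, mul_add, mul_assoc, gmul, gmul'] <;>
    (intro h; exact absurd h.symm hj)

lemma sum_EsGs (hn : 2 ≤ n) (p : LRose K n) : (∑ i : Fin n, Es hn p i * Gs hn p i) = 1 := by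
  rw [← sum_eg (K := K) (n := n), ← sub_eq_zero, ← Finset.sum_sub_distrib]
  have i0 : Fin n := ⟨0, by omega⟩
  rw [← Finset.sum_subset (Finset.subset_univ ({⟨0, by omega⟩, ⟨1, by omega⟩} : Finset (Fin n)))
    (by
      intro i _ hi
      simp only [Finset.mem_insert, Finset.mem_singleton, not_or] at hi
      obtain ⟨h0, h1⟩ := hi
      have h0' : (i : ℕ) ≠ 0 := fun h => h0 (Fin.ext h)
      have h1' : (i : ℕ) ≠ 1 := fun h => h1 (Fin.ext h)
      simp [Es, Gs, if_neg h0', if_neg h1'])]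
  rw [Finset.sum_pair (by simp [Fin.ext_iff] : (⟨0, by omega⟩ : Fin n) ≠ ⟨1, by omega⟩)]
  simp only [Es, Gs, Fin.val_mk, Nat.zero_ne_one, Nat.one_ne_zero, reduceIte, if_pos, if_neg]
  rw [mul_sub, add_mul, mul_assoc]
  abel

lemma relHold (hn : 2 ≤ n) (p : LRose K n) : ∀ ⦃x y⦄, RoseRel K n x y →
    FreeAlgebra.lift K (Efun hn p) x = FreeAlgebra.lift K (Efun hn p) y := by
  intro x y h
  induction h with
  | ghostEdgeSame i =>
      simp only [map_mul, map_one, FreeAlgebra.lift_ι_apply]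
      show Efun hn p (.g i) * Efun hn p (.e i) = 1
      simp [Efun, GsEs]
  | ghostEdgeNe i j h =>
      simp only [map_mul, map_zero, FreeAlgebra.lift_ι_apply]
      show Efun hn p (.g i) * Efun hn p (.e j) = 0
      simp [Efun, GsEs, if_neg h]
  | ck2 =>
      simp only [map_sum, map_mul, map_one, FreeAlgebra.lift_ι_apply]
      show (∑ i : Fin n, Efun hn p (.e i) * Efun hn p (.g i)) = 1
      simpa [Efun] using sum_EsGs hn p

noncomputable def phi (hn : 2 ≤ n) (p : LRose K n) : LRose K n →ₐ[K] LRose K n :=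
  RingQuot.liftAlgHom K ⟨FreeAlgebra.lift K (Efun hn p), relHold hn p⟩

lemma phi_ee (hn : 2 ≤ n) (p : LRose K n) (i : Fin n) : phi hn p (ee K n i) = Es hn p i := by
  rw [ee, phi, RingQuot.liftAlgHom_mkAlgHom_apply, FreeAlgebra.lift_ι_apply]
  rfl

lemma phi_gg (hn : 2 ≤ n) (p : LRose K n) (j : Fin n) : phi hn p (gg K n j) = Gs hn p j := by
  rw [gg, phi, RingQuot.liftAlgHom_mkAlgHom_apply, FreeAlgebra.lift_ι_apply]
  rfl


lemma phi_fix (hn : 2 ≤ n) (p : LRose K n) {x : LRose K n} (hx : x ∈ roseA K n) :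
    phi hn p x = x := by
  induction hx using Algebra.adjoin_induction with
  | mem x hx =>
      rcases hx with ⟨i, hi, rfl⟩ | ⟨j, hj, rfl⟩
      · rw [phi_ee]; unfold Es; rw [if_neg hi]
      · rw [phi_gg]; unfold Gs; rw [if_neg hj]
  | algebraMap r => exact (phi hn p).commutes r
  | add x y _ _ hx hy => rw [map_add, hx, hy]
  | mul x y _ _ hx hy => rw [map_mul, hx, hy]

lemma phi_comp (hn : 2 ≤ n) (p q : LRose K n) (hq : phi hn p q = q) :
    (phi hn p).comp (phi hn q) = phi hn (p + q) := by
  ext t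
  cases t with
  | e i =>
      show phi hn p (phi hn q (ee K n i)) = phi hn (p + q) (ee K n i)
      rw [phi_ee, phi_ee]
      unfold Es
      by_cases hi : (i : ℕ) = 1
      · rw [if_pos hi, if_pos hi, map_add, map_mul, phi_ee, phi_ee, hq]
        unfold Es
        rw [if_pos hi, if_neg (by simp : ¬((⟨0, by omega⟩ : Fin n) : ℕ) = 1),
          mul_add, add_assoc]
      · rw [if_neg hi, if_neg hi, phi_ee]
        unfold Es
        rw [if_neg hi]
  | g j =>
      show phi hn p (phi hn q (gg K n j)) = phi hn (p + q) (gg K n j)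
      rw [phi_gg, phi_gg]
      unfold Gs
      by_cases hj : (j : ℕ) = 0
      · rw [if_pos hj, if_pos hj, map_sub, map_mul, phi_gg, phi_gg, hq]
        unfold Gs
        rw [if_pos hj, if_neg (by simp : ¬((⟨1, by omega⟩ : Fin n) : ℕ) = 0),
          add_mul, sub_sub]
      · rw [if_neg hj, if_neg hj, phi_gg]
        unfold Gs
        rw [if_neg hj]

lemma phi_zero (hn : 2 ≤ n) : phi hn (0 : LRose K n) = AlgHom.id K (LRose K n) := by
  ext t
  cases t with
  | e i =>
      show phi hn (0 : LRose K n) (ee K n i) = ee K n i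
      rw [phi_ee]
      unfold Es
      split_ifs <;> simp
  | g j =>
      show phi hn (0 : LRose K n) (gg K n j) = gg K n j
      rw [phi_gg]
      unfold Gs
      split_ifs <;> simp

noncomputable def PhiE (hn : 2 ≤ n) (p : roseA K n) : LRose K n ≃ₐ[K] LRose K n :=
  AlgEquiv.ofAlgHom (phi hn (p : LRose K n)) (phi hn (-(p : LRose K n)))
    (by rw [phi_comp hn _ _ (phi_fix hn _ (neg_mem p.2)), add_neg_cancel, phi_zero])
    (by rw [phi_comp hn _ _ (phi_fix hn _ p.2), neg_add_cancel, phi_zero])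

lemma PhiE_apply (hn : 2 ≤ n) (p : roseA K n) (x : LRose K n) :
    PhiE hn p x = phi hn (p : LRose K n) x := rfl

lemma one_mem : (1 : LRose K n) ∈ rComponent K n 0 :=
  Submodule.subset_span ⟨[], [], by simp, by simp⟩

lemma ee_mem (i : Fin n) : ee K n i ∈ rComponent K n 1 :=
  Submodule.subset_span ⟨[i], [], by simp, by simp⟩

lemma gg_mem (j : Fin n) : gg K n j ∈ rComponent K n (-1) :=
  Submodule.subset_span ⟨[], [j], by simp, by simp⟩

lemma core (P S Q : List (Fin n)) : ∀ R : List (Fin n),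
    (P.map (ee K n)).prod * ((Q.reverse.map (gg K n)).prod *
      ((R.map (ee K n)).prod * (S.reverse.map (gg K n)).prod)) ∈
      rComponent K n (((P.length : ℤ) - Q.length) + ((R.length : ℤ) - S.length)) := by
  induction Q with
  | nil =>
      intro R
      apply Submodule.subset_span
      refine ⟨P ++ R, S, by push_cast [List.length_append, List.length_nil]; ring, ?_⟩
      simp [List.map_append, List.prod_append, mul_assoc]
  | cons a Q' ih =>
      intro R
      cases R with
      | nil =>
          apply Submodule.subset_span
          refine ⟨P, S ++ a :: Q',
            by push_cast [List.length_append, List.length_cons, List.length_nil]; ring, ?_⟩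
          simp [List.reverse_append, List.map_append, List.prod_append, mul_assoc]
      | cons b R' =>
          simp only [List.reverse_cons, List.map_append, List.prod_append, List.map_cons,
            List.prod_cons, List.map_nil, List.prod_nil, mul_one, one_mul, mul_assoc]
          rw [gmul']
          by_cases hab : a = b
          · rw [if_pos hab]
            have hd : ((((P.length : ℤ) - (a :: Q').length)) +
                (((b :: R').length : ℤ) - S.length))
                = (((P.length : ℤ) - Q'.length) + ((R'.length : ℤ) - S.length)) := by
              push_cast [List.length_cons]; ring
            rw [hd]
            simpa [mul_assoc] using ih R'
          · rw [if_neg hab]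
            simp

lemma comp_mul {d1 d2 : ℤ} {x y : LRose K n} (hx : x ∈ rComponent K n d1)
    (hy : y ∈ rComponent K n d2) : x * y ∈ rComponent K n (d1 + d2) := by
  have hle : rComponent K n d1 * rComponent K n d2 ≤ rComponent K n (d1 + d2) := by
    rw [rComponent, rComponent, Submodule.span_mul_span]
    refine Submodule.span_le.2 ?_
    rintro z ⟨x', ⟨P, Q, hPQ, rfl⟩, y', ⟨R, S, hRS, rfl⟩, rfl⟩
    rw [← hPQ, ← hRS]
    simpa [mul_assoc] using core P S Q R
  exact hle (Submodule.mul_mem_mul hx hy)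

lemma prod_mem_comp (c : ℤ) (l : List (LRose K n)) (h : ∀ x ∈ l, x ∈ rComponent K n c) :
    l.prod ∈ rComponent K n (l.length * c) := by
  induction l with
  | nil => simpa using one_mem
  | cons a t ih =>
      rw [List.prod_cons]
      have h1 := comp_mul (h a (by simp)) (ih fun x hx => h x (by simp [hx]))
      have hd : (((a :: t).length : ℤ)) * c = c + t.length * c := by
        push_cast [List.length_cons]; ring
      rw [hd]; exact h1

lemma phi_graded (hn : 2 ≤ n) (p : LRose K n) (hp : p ∈ rComponent K n 0) :
    RGraded K n (phi hn p) := by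
  have he : ∀ i, phi hn p (ee K n i) ∈ rComponent K n 1 := by
    intro i
    rw [phi_ee]; unfold Es; split_ifs
    · have h1 := comp_mul (ee_mem (K := K) (n := n) ⟨0, by omega⟩) hp
      norm_num at h1
      exact add_mem (ee_mem i) h1
    · exact ee_mem i
  have hg : ∀ j, phi hn p (gg K n j) ∈ rComponent K n (-1) := by
    intro j
    rw [phi_gg]; unfold Gs; split_ifs
    · have h1 := comp_mul hp (gg_mem (K := K) (n := n) ⟨1, by omega⟩)
      norm_num at h1
      exact sub_mem (gg_mem j) h1
    · exact gg_mem j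
  intro d x hx
  induction hx using Submodule.span_induction with
  | mem x hx =>
      obtain ⟨P, Q, hPQ, rfl⟩ := hx
      rw [map_mul, map_list_prod, map_list_prod, List.map_map, List.map_map]
      have h1 : (List.map ((phi hn p) ∘ ee K n) P).prod ∈ rComponent K n ((P.length : ℤ)) := by
        have := prod_mem_comp 1 (List.map ((phi hn p) ∘ ee K n) P)
          (by rintro x hx'
              obtain ⟨i, _, rfl⟩ := List.mem_map.1 hx'
              exact he i)
        simpa using this
      have h2 : (List.map ((phi hn p) ∘ gg K n) Q.reverse).prod ∈
          rComponent K n (-(Q.length : ℤ)) := by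
        have := prod_mem_comp (-1) (List.map ((phi hn p) ∘ gg K n) Q.reverse)
          (by rintro x hx'
              obtain ⟨j, _, rfl⟩ := List.mem_map.1 hx'
              exact hg j)
        simpa using this
      have h3 := comp_mul h1 h2
      rwa [← hPQ, sub_eq_add_neg]
  | zero => rw [map_zero]; exact Submodule.zero_mem _
  | add x y _ _ hx hy => rw [map_add]; exact add_mem hx hy
  | smul a x _ hx => rw [map_smul]; exact Submodule.smul_mem _ _ hx

end Stmt8

/-- The map `p ↦ φ_{U_p}` is an injective group homomorphism from
`(A_{R_n}(e_1, e_2), +)` into `Aut(L_K(R_n))`, whose restriction to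
`A_{R_n}(e_1, e_2) ∩ L_K(R_n)_0` lands in `Aut^{gr}(L_K(R_n))`. -/
theorem stmt8 (K : Type) [Field K] (n : ℕ) (hn : 2 ≤ n) :
    ∃ Φ : roseA K n → (LRose K n ≃ₐ[K] LRose K n),
      Function.Injective Φ ∧
      (∀ p q : roseA K n, Φ (p + q) = Φ p * Φ q) ∧
      (∀ p : roseA K n,
        (∀ i : Fin n, (i : ℕ) ≠ 1 → (Φ p) (ee K n i) = ee K n i) ∧
        (∀ j : Fin n, (j : ℕ) ≠ 0 → (Φ p) (gg K n j) = gg K n j) ∧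
        ((Φ p) (ee K n ⟨1, by omega⟩) =
          ee K n ⟨1, by omega⟩ + ee K n ⟨0, by omega⟩ * (p : LRose K n)) ∧
        ((Φ p) (gg K n ⟨0, by omega⟩) =
          gg K n ⟨0, by omega⟩ - (p : LRose K n) * gg K n ⟨1, by omega⟩)) ∧
      (∀ p : roseA K n, (p : LRose K n) ∈ rComponent K n 0 → RGraded K n ⇑(Φ p)) := by
  refine ⟨Stmt8.PhiE hn, ?_, ?_, ?_, ?_⟩
  · intro p q h
    have h1 : Stmt8.phi hn (p : LRose K n) (ee K n ⟨1, by omega⟩) =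
        Stmt8.phi hn (q : LRose K n) (ee K n ⟨1, by omega⟩) := by
      exact congrArg (fun e : LRose K n ≃ₐ[K] LRose K n => e (ee K n ⟨1, by omega⟩)) h
    rw [Stmt8.phi_ee, Stmt8.phi_ee] at h1
    unfold Stmt8.Es at h1
    rw [if_pos rfl] at h1
    have h2 : ee K n ⟨0, by omega⟩ * (p : LRose K n) =
        ee K n ⟨0, by omega⟩ * (q : LRose K n) := add_left_cancel h1
    have h3 := congrArg (fun z => gg K n ⟨0, by omega⟩ * z) h2
    simp only [Stmt8.gmul', if_pos rfl] at h3
    exact Subtype.ext h3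
  · intro p q
    apply AlgEquiv.ext
    intro x
    rw [AlgEquiv.mul_apply]
    show Stmt8.phi hn ((p + q : roseA K n) : LRose K n) x
      = Stmt8.phi hn (p : LRose K n) (Stmt8.phi hn (q : LRose K n) x)
    have hc := Stmt8.phi_comp hn (p : LRose K n) (q : LRose K n)
      (Stmt8.phi_fix hn _ q.2)
    rw [Subalgebra.coe_add, ← hc]
    rfl
  · intro p
    refine ⟨?_, ?_, ?_, ?_⟩
    · intro i hi
      show Stmt8.phi hn (p : LRose K n) (ee K n i) = ee K n i
      rw [Stmt8.phi_ee]; unfold Stmt8.Es; rw [if_neg hi]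
    · intro j hj
      show Stmt8.phi hn (p : LRose K n) (gg K n j) = gg K n j
      rw [Stmt8.phi_gg]; unfold Stmt8.Gs; rw [if_neg hj]
    · show Stmt8.phi hn (p : LRose K n) (ee K n ⟨1, by omega⟩) = _
      rw [Stmt8.phi_ee]; unfold Stmt8.Es; rw [if_pos rfl]
    · show Stmt8.phi hn (p : LRose K n) (gg K n ⟨0, by omega⟩) = _
      rw [Stmt8.phi_gg]; unfold Stmt8.Gs; rw [if_pos rfl]
  · intro p hp
    exact Stmt8.phi_graded hn (p : LRose K n) hp
end

section
/- Let n ≥ 2 be an integer, K a field, and R_n the rose graph with n petals. For every unital K-algebra endomorphism λ of L_K(R_n), the element x := Σ_{i=1}^n λ(e_i) e_i* is a unit of L_K(R_n), and λ = f_x. In particular, if τ_u is the inner automorphism r ↦ u^{-1} r u of L_K(R_n) generated by a unit u, then τ_u = f_x where x = u^{-1}(Σ_{i=1}^n e_i u e_i*). -/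
section Aux

variable {K : Type} [Field K] {n : ℕ}

lemma gg_mul_ee (i j : Fin n) :
    gg K n i * ee K n j = if i = j then 1 else 0 := by
  unfold gg ee
  rw [← map_mul]
  by_cases h : i = j
  · subst h
    simp [RingQuot.mkAlgHom_rel K (RoseRel.ghostEdgeSame i)]
  · simp [h, RingQuot.mkAlgHom_rel K (RoseRel.ghostEdgeNe i j h)]

lemma sum_ee_mul_gg : (∑ i : Fin n, ee K n i * gg K n i) = 1 := by
  have := RingQuot.mkAlgHom_rel K (RoseRel.ck2 (K := K) (n := n))
  simpa [ee, gg, map_sum, map_mul] using this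

lemma sum_a_gg_mul_ee (a : Fin n → LRose K n) (i : Fin n) :
    (∑ j, a j * gg K n j) * ee K n i = a i := by
  rw [Finset.sum_mul]
  simp_rw [mul_assoc, gg_mul_ee]
  simp

lemma gg_mul_sum_ee_b (b : Fin n → LRose K n) (i : Fin n) :
    gg K n i * (∑ j, ee K n j * b j) = b i := by
  rw [Finset.mul_sum]
  simp_rw [← mul_assoc, gg_mul_ee]
  simp

lemma key_sum (a b : Fin n → LRose K n) :
    (∑ i, a i * gg K n i) * (∑ j, ee K n j * b j) = ∑ i, a i * b i := by
  rw [Finset.sum_mul]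
  simp_rw [mul_assoc, gg_mul_sum_ee_b]

lemma gg_mul_s (c : LRose K n) (i : Fin n) :
    gg K n i * (∑ j, ee K n j * c * gg K n j) = c * gg K n i := by
  simp_rw [mul_assoc]
  exact gg_mul_sum_ee_b (fun j => c * gg K n j) i

lemma s_mul_s (c d : LRose K n) (h : c * d = 1) :
    (∑ i, ee K n i * c * gg K n i) * (∑ j, ee K n j * d * gg K n j) = 1 := by
  have hterm : ∀ i : Fin n,
      (ee K n i * c * gg K n i) * (∑ j, ee K n j * d * gg K n j)
        = ee K n i * gg K n i := by
    intro i
    rw [mul_assoc, gg_mul_s, ← mul_assoc, mul_assoc (ee K n i) c d, h, mul_one]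
  rw [Finset.sum_mul]
  simp_rw [hterm]
  exact sum_ee_mul_gg

lemma lrose_induction {P : LRose K n → Prop}
    (halg : ∀ k : K, P (algebraMap K (LRose K n) k))
    (he : ∀ i, P (ee K n i)) (hg : ∀ i, P (gg K n i))
    (hmul : ∀ a b, P a → P b → P (a * b))
    (hadd : ∀ a b, P a → P b → P (a + b)) :
    ∀ r, P r := by
  intro r
  obtain ⟨a, rfl⟩ := RingQuot.mkAlgHom_surjective K (RoseRel K n) r
  induction a using FreeAlgebra.induction with
  | grade0 k => rw [AlgHom.commutes]; exact halg k
  | grade1 x =>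
    cases x with
    | e i => exact he i
    | g i => exact hg i
  | mul a b ha hb => rw [map_mul]; exact hmul _ _ ha hb
  | add a b ha hb => rw [map_add]; exact hadd _ _ ha hb

end Aux

/-- Every unital `K`-algebra endomorphism `λ` of `L_K(R_n)` equals
`f_x` for the unit `x = Σ_i λ(e_i) e_i*`; in particular the inner automorphism
`τ_u : r ↦ u^{-1} r u` equals `f_x` for `x = u^{-1}(Σ_i e_i u e_i*)`. -/
theorem stmt9 (K : Type) [Field K] (n : ℕ) (hn : 2 ≤ n) :
    (∀ lam : LRose K n →ₐ[K] LRose K n,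
      ∃ y : LRose K n,
        (∑ i, lam (ee K n i) * gg K n i) * y = 1 ∧
        y * (∑ i, lam (ee K n i) * gg K n i) = 1 ∧
        (∀ i, lam (ee K n i) = (∑ j, lam (ee K n j) * gg K n j) * ee K n i) ∧
        (∀ i, lam (gg K n i) = gg K n i * y)) ∧
    (∀ u u' : LRose K n, u * u' = 1 → u' * u = 1 →
      ∃ y : LRose K n,
        (u' * ∑ i, ee K n i * u * gg K n i) * y = 1 ∧
        y * (u' * ∑ i, ee K n i * u * gg K n i) = 1 ∧
        ∀ μ : LRose K n →ₐ[K] LRose K n,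
          (∀ i, μ (ee K n i) = (u' * ∑ j, ee K n j * u * gg K n j) * ee K n i) →
          (∀ i, μ (gg K n i) = gg K n i * y) →
          ∀ r : LRose K n, μ r = u' * r * u) := by
  constructor
  · -- Part 1
    intro lam
    refine ⟨∑ i, ee K n i * lam (gg K n i), ?_, ?_, ?_, ?_⟩
    · rw [key_sum]
      simp_rw [← map_mul]
      rw [← map_sum, sum_ee_mul_gg, map_one]
    · have inner : ∀ i : Fin n,
          lam (gg K n i) * (∑ j, lam (ee K n j) * gg K n j) = gg K n i := by
        intro i
        rw [Finset.mul_sum]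
        simp_rw [← mul_assoc, ← map_mul, gg_mul_ee]
        simp [apply_ite lam, ite_mul]
      rw [Finset.sum_mul]
      simp_rw [mul_assoc, inner]
      exact sum_ee_mul_gg
    · intro i
      rw [sum_a_gg_mul_ee (fun j => lam (ee K n j)) i]
    · intro i
      rw [gg_mul_sum_ee_b (fun j => lam (gg K n j)) i]
  · -- Part 2
    intro u u' huu' hu'u
    set s : LRose K n := ∑ i, ee K n i * u * gg K n i with hs
    set t : LRose K n := ∑ i, ee K n i * u' * gg K n i with ht
    have hst : s * t = 1 := s_mul_s u u' huu'
    have hts : t * s = 1 := s_mul_s u' u hu'u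
    refine ⟨t * u, ?_, ?_, ?_⟩
    · rw [mul_assoc u' s, ← mul_assoc s t u, hst, one_mul, hu'u]
    · rw [mul_assoc t u, ← mul_assoc u u' s, huu', one_mul, hts]
    · intro μ hμe hμg
      have hu : ∀ x : LRose K n, u * (u' * x) = x := fun x => by
        rw [← mul_assoc, huu', one_mul]
      refine lrose_induction ?_ ?_ ?_ ?_ ?_
      · intro k
        rw [AlgHom.commutes, ← Algebra.commutes k u', mul_assoc, hu'u, mul_one]
      · intro i
        rw [hμe i, mul_assoc, sum_a_gg_mul_ee (fun j => ee K n j * u) i, ← mul_assoc]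
      · intro i
        rw [hμg i, ← mul_assoc, gg_mul_s u' i]
      · intro a b ha hb
        rw [map_mul, ha, hb]
        simp [mul_assoc, hu]
      · intro a b ha hb
        rw [map_add, ha, hb, mul_add, add_mul]
end
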